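/- For any two probability measures μ₁, μ₂ on a complete separable metric space (X, d), one has d_{W₁}(μ₁, μ₂) ≤ √Var(μ₁, μ₂) ≤ d_{W₁}(μ₁, μ₂) + √Var(μ₁) + √Var(μ₂), where d_{W₁} denotes the 1-Wasserstein distance. -/

import Mathlib

open scoped ENNReal

open MeasureTheory

/-- The variance between two measures on a metric space:
`Var(μ, ν) = ∫∫ d²(x, y) dμ(x) dν(y)` (valued in `ℝ≥0∞`, may be `∞`). -/
noncomputable def Var {X : Type*} [MetricSpace X] [MeasurableSpace X]
    (μ ν : Measure X) : ℝ≥0∞ :=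
  ∫⁻ x, ∫⁻ y, edist x y ^ 2 ∂ν ∂μ

/-- The 1-Wasserstein distance: the infimum of `∫ d(x, y) dq(x, y)` over all
couplings `q` of `μ` and `ν` (valued in `ℝ≥0∞`, may be `∞`). -/
noncomputable def W1 {X : Type*} [MetricSpace X] [MeasurableSpace X]
    (μ ν : Measure X) : ℝ≥0∞ :=
  ⨅ (q : Measure (X × X)) (_ : q.map Prod.fst = μ ∧ q.map Prod.snd = ν),
    ∫⁻ p, edist p.1 p.2 ∂q

private lemma pow2_eq_rpow (a : ℝ≥0∞) : a ^ 2 = a ^ (2 : ℝ) := by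
  rw [← ENNReal.rpow_natCast a 2]; norm_num

/-- Cauchy–Schwarz for lower integrals over a probability measure. -/
private lemma lintegral_le_rpow_sq {α : Type*} [MeasurableSpace α] (μ : Measure α)
    [IsProbabilityMeasure μ] {f : α → ℝ≥0∞} (hf : AEMeasurable f μ) :
    ∫⁻ a, f a ∂μ ≤ (∫⁻ a, f a ^ (2 : ℝ) ∂μ) ^ (1 / 2 : ℝ) := by
  have hpq : Real.HolderConjugate 2 2 := Real.HolderConjugate.two_two
  have h := ENNReal.lintegral_mul_le_Lp_mul_Lq μ hpq hf
    (aemeasurable_const : AEMeasurable (fun _ => (1 : ℝ≥0∞)) μ)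
  simpa using h

/-- For probability measures `μ₁, μ₂` on a complete separable metric space,
`d_{W₁}(μ₁, μ₂) ≤ √Var(μ₁, μ₂) ≤ d_{W₁}(μ₁, μ₂) + √Var(μ₁) + √Var(μ₂)`. -/
theorem w1_le_sqrt_var_le {X : Type*} [MetricSpace X] [CompleteSpace X]
    [TopologicalSpace.SeparableSpace X] [MeasurableSpace X] [BorelSpace X]
    (μ₁ μ₂ : Measure X) [IsProbabilityMeasure μ₁] [IsProbabilityMeasure μ₂] :
    W1 μ₁ μ₂ ≤ Var μ₁ μ₂ ^ (1 / 2 : ℝ) ∧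
      Var μ₁ μ₂ ^ (1 / 2 : ℝ)
        ≤ W1 μ₁ μ₂ + Var μ₁ μ₁ ^ (1 / 2 : ℝ) + Var μ₂ μ₂ ^ (1 / 2 : ℝ) := by
  have hed : Measurable fun p : X × X => edist p.1 p.2 := measurable_edist
  have hed2 : Measurable fun p : X × X => edist p.1 p.2 ^ (2 : ℝ) :=
    hed.pow_const _
  set π : Measure (X × X) := μ₁.prod μ₂ with hπ
  have hVar12 : Var μ₁ μ₂ = ∫⁻ p : X × X, edist p.1 p.2 ^ (2 : ℝ) ∂π := by
    rw [Var]
    simp only [pow2_eq_rpow]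
    exact (lintegral_prod _ hed2.aemeasurable).symm
  constructor
  · -- W1 ≤ √Var
    have hc : π.map Prod.fst = μ₁ ∧ π.map Prod.snd = μ₂ := by
      constructor
      · rw [hπ, Measure.map_fst_prod]; simp
      · rw [hπ, Measure.map_snd_prod]; simp
    refine le_trans (iInf₂_le π hc) ?_
    rw [hVar12]
    exact lintegral_le_rpow_sq _ hed.aemeasurable
  · -- √Var ≤ W1 + √Var₁ + √Var₂
    have key : ∀ q : Measure (X × X), (q.map Prod.fst = μ₁ ∧ q.map Prod.snd = μ₂) →
        Var μ₁ μ₂ ^ (1 / 2 : ℝ) ≤ (∫⁻ p, edist p.1 p.2 ∂q)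
          + Var μ₁ μ₁ ^ (1 / 2 : ℝ) + Var μ₂ μ₂ ^ (1 / 2 : ℝ) := by
      intro q hq
      haveI hq1 : IsProbabilityMeasure q := ⟨by
        have : q.map Prod.fst Set.univ = q Set.univ := by
          rw [Measure.map_apply measurable_fst MeasurableSet.univ, Set.preimage_univ]
        rw [← this, hq.1, measure_univ]⟩
      set C := ∫⁻ p, edist p.1 p.2 ∂q with hC
      set f : X → ℝ≥0∞ := fun x => ∫⁻ x', edist x x' ∂μ₁ with hf
      set g : X → ℝ≥0∞ := fun y => ∫⁻ y', edist y' y ∂μ₂ with hg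
      have hfm : Measurable f := Measurable.lintegral_prod_right measurable_edist
      have hgm : Measurable g :=
        Measurable.lintegral_prod_right (measurable_edist.comp measurable_swap)
      -- pointwise bound
      have hpt : ∀ x y : X, edist x y ≤ f x + C + g y := by
        intro x y
        have e1 : f x = ∫⁻ p : X × X, edist x p.1 ∂q := by
          rw [hf, ← hq.1]
          exact lintegral_map (show Measurable fun x' : X => edist x x' from
            measurable_const.edist measurable_id) measurable_fst
        have e2 : g y = ∫⁻ p : X × X, edist p.2 y ∂q := by
          rw [hg, ← hq.2]
          exact lintegral_map (show Measurable fun y' : X => edist y' y from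
            measurable_id.edist measurable_const) measurable_snd
        calc edist x y = ∫⁻ _ : X × X, edist x y ∂q := by simp
          _ ≤ ∫⁻ p : X × X, (edist x p.1 + edist p.1 p.2 + edist p.2 y) ∂q :=
              lintegral_mono fun p => edist_triangle4 x p.1 p.2 y
          _ = (∫⁻ p : X × X, (edist x p.1 + edist p.1 p.2) ∂q)
              + ∫⁻ p : X × X, edist p.2 y ∂q :=
              lintegral_add_right _ (measurable_snd.edist measurable_const)
          _ = f x + C + g y := by
              rw [lintegral_add_right _ hed, ← e1, ← e2, hC]
      -- bound on the f-term
      have hf_bound : (∫⁻ p : X × X, f p.1 ^ (2 : ℝ) ∂π) ^ (1 / 2 : ℝ)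
          ≤ Var μ₁ μ₁ ^ (1 / 2 : ℝ) := by
        refine ENNReal.rpow_le_rpow ?_ (by norm_num)
        have h1 : ∫⁻ p : X × X, f p.1 ^ (2 : ℝ) ∂π = ∫⁻ x, f x ^ (2 : ℝ) ∂μ₁ := by
          rw [hπ, lintegral_prod _ ((show Measurable fun p : X × X => f p.1 ^ (2 : ℝ) from (hfm.comp measurable_fst).pow_const _)).aemeasurable]
          simp
        rw [h1, Var]
        simp only [pow2_eq_rpow]
        refine lintegral_mono fun x => ?_
        have := lintegral_le_rpow_sq μ₁
          ((measurable_const.edist measurable_id).aemeasurable : AEMeasurable (fun x' => edist x x') μ₁)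
        calc f x ^ (2 : ℝ) ≤ ((∫⁻ x', edist x x' ^ (2 : ℝ) ∂μ₁) ^ (1 / 2 : ℝ)) ^ (2 : ℝ) :=
              ENNReal.rpow_le_rpow this (by norm_num)
          _ = ∫⁻ x', edist x x' ^ (2 : ℝ) ∂μ₁ := by
              rw [← ENNReal.rpow_mul]; norm_num
      -- bound on the g-term
      have hg_bound : (∫⁻ p : X × X, g p.2 ^ (2 : ℝ) ∂π) ^ (1 / 2 : ℝ)
          ≤ Var μ₂ μ₂ ^ (1 / 2 : ℝ) := by
        refine ENNReal.rpow_le_rpow ?_ (by norm_num)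
        have h1 : ∫⁻ p : X × X, g p.2 ^ (2 : ℝ) ∂π = ∫⁻ y, g y ^ (2 : ℝ) ∂μ₂ := by
          rw [hπ, lintegral_prod _ ((show Measurable fun p : X × X => g p.2 ^ (2 : ℝ) from (hgm.comp measurable_snd).pow_const _)).aemeasurable]
          simp
        rw [h1, Var]
        simp only [pow2_eq_rpow]
        refine lintegral_mono fun y => ?_
        have := lintegral_le_rpow_sq μ₂
          ((measurable_id.edist measurable_const).aemeasurable : AEMeasurable (fun y' => edist y' y) μ₂)
        calc g y ^ (2 : ℝ) ≤ ((∫⁻ y', edist y' y ^ (2 : ℝ) ∂μ₂) ^ (1 / 2 : ℝ)) ^ (2 : ℝ) :=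
              ENNReal.rpow_le_rpow this (by norm_num)
          _ = ∫⁻ y', edist y' y ^ (2 : ℝ) ∂μ₂ := by
              rw [← ENNReal.rpow_mul]; norm_num
          _ = ∫⁻ y', edist y y' ^ (2 : ℝ) ∂μ₂ := by
              simp only [edist_comm]
      -- constant term
      have hC_term : (∫⁻ _ : X × X, C ^ (2 : ℝ) ∂π) ^ (1 / 2 : ℝ) = C := by
        rw [lintegral_const]
        simp only [measure_univ, mul_one]
        rw [← ENNReal.rpow_mul]; norm_num
      -- Minkowski
      have m1 : (∫⁻ p : X × X, (f p.1 + C + g p.2) ^ (2 : ℝ) ∂π) ^ (1 / 2 : ℝ)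
          ≤ (∫⁻ p : X × X, (f p.1 + C) ^ (2 : ℝ) ∂π) ^ (1 / 2 : ℝ)
            + (∫⁻ p : X × X, g p.2 ^ (2 : ℝ) ∂π) ^ (1 / 2 : ℝ) :=
        ENNReal.lintegral_Lp_add_le
          ((hfm.comp measurable_fst).add_const C).aemeasurable
          (hgm.comp measurable_snd).aemeasurable one_le_two
      have m2 : (∫⁻ p : X × X, (f p.1 + C) ^ (2 : ℝ) ∂π) ^ (1 / 2 : ℝ)
          ≤ (∫⁻ p : X × X, f p.1 ^ (2 : ℝ) ∂π) ^ (1 / 2 : ℝ)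
            + (∫⁻ _ : X × X, C ^ (2 : ℝ) ∂π) ^ (1 / 2 : ℝ) :=
        ENNReal.lintegral_Lp_add_le
          (hfm.comp measurable_fst).aemeasurable aemeasurable_const one_le_two
      calc Var μ₁ μ₂ ^ (1 / 2 : ℝ)
          ≤ (∫⁻ p : X × X, (f p.1 + C + g p.2) ^ (2 : ℝ) ∂π) ^ (1 / 2 : ℝ) := by
            rw [hVar12]
            refine ENNReal.rpow_le_rpow (lintegral_mono fun p => ?_) (by norm_num)
            exact ENNReal.rpow_le_rpow (hpt p.1 p.2) (by norm_num)
        _ ≤ (∫⁻ p : X × X, (f p.1 + C) ^ (2 : ℝ) ∂π) ^ (1 / 2 : ℝ)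
            + (∫⁻ p : X × X, g p.2 ^ (2 : ℝ) ∂π) ^ (1 / 2 : ℝ) := m1
        _ ≤ ((∫⁻ p : X × X, f p.1 ^ (2 : ℝ) ∂π) ^ (1 / 2 : ℝ)
              + (∫⁻ _ : X × X, C ^ (2 : ℝ) ∂π) ^ (1 / 2 : ℝ))
            + (∫⁻ p : X × X, g p.2 ^ (2 : ℝ) ∂π) ^ (1 / 2 : ℝ) := add_le_add_left m2 _
        _ ≤ (Var μ₁ μ₁ ^ (1 / 2 : ℝ) + C) + Var μ₂ μ₂ ^ (1 / 2 : ℝ) := by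
            rw [hC_term]
            exact add_le_add (add_le_add hf_bound le_rfl) hg_bound
        _ = C + Var μ₁ μ₁ ^ (1 / 2 : ℝ) + Var μ₂ μ₂ ^ (1 / 2 : ℝ) := by
            rw [add_comm (Var μ₁ μ₁ ^ (1 / 2 : ℝ)) C]
    rw [W1]
    simp only [ENNReal.iInf_add]
    exact le_iInf fun q => le_iInf fun hq => key q hq
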